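/- Let R be an RC-closed collection of strings over the DNA alphabet and let X be a nonempty string over the DNA alphabet. Then the set of distinct right-context symbols of the occurrences of X in strings of R equals the image under the complement permutation π of the set of distinct left-context symbols of the occurrences of the reverse complement X̂ in strings of R. -/

import Mathlib

/-- The DNA alphabet Σ = {A, C, G, T}. -/
inductive Base : Type
  | A | C | G | T
  deriving DecidableEq, Repr

instance : Fintype Base where
  elems := {.A, .C, .G, .T}
  complete := fun x => by cases x <;> simp

/-- The DNA complement permutation π: A ↔ T, C ↔ G. -/
def comp : Base → Base
  | .A => .T
  | .T => .A
  | .C => .G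
  | .G => .C

/-- The reverse complement Ŵ of a DNA string W. -/
def revComp (W : List Base) : List Base := W.reverse.map comp

/-- `W` occurs in `T` at (0-indexed) position `i`, i.e. `T[i..i+|W|-1] = W`. -/
def occursAt (W T : List Base) (i : ℕ) : Prop :=
  i + W.length ≤ T.length ∧ (T.drop i).take W.length = W

instance (W T : List Base) : DecidablePred (occursAt W T) := fun i =>
  inferInstanceAs (Decidable (_ ∧ _))

/-- The number of occurrences of `W` in `T`. -/
noncomputable def occCount (W T : List Base) : ℕ := {i | occursAt W T i}.ncard

/-- The alphabet with the sentinel `$`: the sentinel is `⊥`, the DNA symbols are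
coerced. The complement permutation is extended by `π($) = $`
(i.e. `WithBot.map comp ⊥ = ⊥`). -/
abbrev SymB := WithBot Base

/-- Left-context symbol of an occurrence of a string at (0-indexed) position `i`
in `T`: the symbol `T[i-1]` if `i > 0`, and the sentinel `$` otherwise. -/
def leftCtx (T : List Base) (i : ℕ) : SymB :=
  if i = 0 then ⊥ else (T[i-1]?).elim ⊥ (fun a => (a : SymB))

/-- Right-context symbol of an occurrence of a string of length `m` at
(0-indexed) position `i` in `T`: the symbol `T[i+m]` if the occurrence does not
end at the last position of `T`, and the sentinel `$` otherwise. -/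
def rightCtx (T : List Base) (m i : ℕ) : SymB :=
  (T[i+m]?).elim ⊥ (fun a => (a : SymB))

/-- A collection (multiset) of strings is RC-closed if every string has the same
multiplicity as its reverse complement. -/
def RCClosed (R : Multiset (List Base)) : Prop :=
  ∀ T : List Base, R.count T = R.count (revComp T)

/-- The set of distinct left-context symbols of the occurrences of `X` in
strings of `R`. -/
def leftCtxSet (R : Multiset (List Base)) (X : List Base) : Set SymB :=
  {c | ∃ T ∈ R, ∃ i : ℕ, occursAt X T i ∧ leftCtx T i = c}

/-- The set of distinct right-context symbols of the occurrences of `X` in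
strings of `R`. -/
def rightCtxSet (R : Multiset (List Base)) (X : List Base) : Set SymB :=
  {c | ∃ T ∈ R, ∃ i : ℕ, occursAt X T i ∧ rightCtx T X.length i = c}


lemma comp_comp (a : Base) : comp (comp a) = a := by cases a <;> rfl

lemma revComp_revComp (T : List Base) : revComp (revComp T) = T := by
  simp [revComp, List.map_reverse, List.reverse_reverse, List.map_map,
    Function.comp_def, comp_comp]

lemma revComp_append (a b : List Base) : revComp (a ++ b) = revComp b ++ revComp a := by
  simp [revComp]

lemma occursAt_iff (W T : List Base) (i : ℕ) :
    occursAt W T i ↔ ∃ pre suf, T = pre ++ W ++ suf ∧ pre.length = i := by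
  constructor
  · rintro ⟨h1, h2⟩
    refine ⟨T.take i, T.drop (i + W.length), ?_, ?_⟩
    · have h3 : T.drop i = W ++ T.drop (i + W.length) := by
        conv_lhs => rw [← List.take_append_drop W.length (T.drop i)]
        rw [h2, List.drop_drop]
      calc T = T.take i ++ T.drop i := (List.take_append_drop _ _).symm
        _ = T.take i ++ (W ++ T.drop (i + W.length)) := by rw [h3]
        _ = T.take i ++ W ++ T.drop (i + W.length) := by rw [List.append_assoc]
    · simp; omega
  · rintro ⟨pre, suf, rfl, rfl⟩
    constructor
    · simp
    · rw [List.append_assoc, List.drop_append_of_le_length (le_refl _)]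
      simp

lemma rightCtx_decomp (pre W suf : List Base) :
    rightCtx (pre ++ W ++ suf) W.length pre.length =
      (suf.head?).elim ⊥ (fun a => (a : SymB)) := by
  unfold rightCtx
  rw [show pre ++ W ++ suf = (pre ++ W) ++ suf from rfl,
    List.getElem?_append_right (by simp)]
  simp [List.head?_eq_getElem?]

lemma leftCtx_decomp (pre W suf : List Base) :
    leftCtx (pre ++ W ++ suf) pre.length =
      (pre.getLast?).elim ⊥ (fun a => (a : SymB)) := by
  unfold leftCtx
  rcases List.eq_nil_or_concat pre with rfl | ⟨l, a, rfl⟩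
  · simp
  · rw [List.concat_eq_append]
    rw [if_neg (by simp)]
    rw [show l ++ [a] ++ W ++ suf = (l ++ [a]) ++ (W ++ suf) from by simp,
      List.getElem?_append_left (by simp)]
    simp [List.getLast?_eq_getElem?]

lemma head?_revComp (l : List Base) : (revComp l).head? = comp <$> l.getLast? := by
  simp [revComp, List.head?_map, List.head?_reverse]

lemma getLast?_revComp (l : List Base) : (revComp l).getLast? = comp <$> l.head? := by
  simp [revComp, List.getLast?_map, List.getLast?_reverse]

lemma mem_revComp {R : Multiset (List Base)} (hR : RCClosed R) {T : List Base}
    (hT : T ∈ R) : revComp T ∈ R := by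
  rw [← Multiset.count_pos, ← hR T, Multiset.count_pos]
  exact hT

lemma map_comp_elim (o : Option Base) :
    WithBot.map comp (o.elim ⊥ (fun a => (a : SymB))) =
      (comp <$> o).elim ⊥ (fun a => (a : SymB)) := by
  cases o <;> rfl

/-- in an RC-closed collection `R`, for a nonempty DNA string `X`,
the set of distinct right-context symbols of the occurrences of `X` equals the
image under the (extended) complement permutation of the set of distinct
left-context symbols of the occurrences of `X̂`. -/
theorem stmt_4 (R : Multiset (List Base)) (hR : RCClosed R)
    (X : List Base) (hX : X ≠ []) :
    rightCtxSet R X = (WithBot.map comp) '' (leftCtxSet R (revComp X)) := by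
  ext c
  constructor
  · rintro ⟨T, hT, i, hocc, rfl⟩
    obtain ⟨pre, suf, rfl, rfl⟩ := (occursAt_iff _ _ _).1 hocc
    refine ⟨leftCtx (revComp (pre ++ X ++ suf)) (revComp suf).length,
      ⟨revComp (pre ++ X ++ suf), mem_revComp hR hT, (revComp suf).length, ?_, rfl⟩, ?_⟩
    · rw [occursAt_iff]
      exact ⟨revComp suf, revComp pre, by simp [revComp_append], rfl⟩
    · rw [show revComp (pre ++ X ++ suf) = revComp suf ++ revComp X ++ revComp pre from by
        simp [revComp_append]]
      rw [leftCtx_decomp, rightCtx_decomp, map_comp_elim, getLast?_revComp]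
      cases suf.head? <;> simp [comp_comp]
  · rintro ⟨c', ⟨T, hT, i, hocc, rfl⟩, rfl⟩
    obtain ⟨pre, suf, rfl, rfl⟩ := (occursAt_iff _ _ _).1 hocc
    refine ⟨revComp (pre ++ revComp X ++ suf), mem_revComp hR hT, (revComp suf).length, ?_, ?_⟩
    · rw [occursAt_iff]
      exact ⟨revComp suf, revComp pre, by simp [revComp_append, revComp_revComp], rfl⟩
    · rw [show revComp (pre ++ revComp X ++ suf) = revComp suf ++ X ++ revComp pre from by
        simp [revComp_append, revComp_revComp]]
      have h := rightCtx_decomp (revComp suf) X (revComp pre)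
      rw [h, leftCtx_decomp, map_comp_elim, head?_revComp]
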